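/- The convolution product of two log-concave sequences of strictly positive real numbers is log-concave. That is, if (a_i)_{i=0}^m and (b_j)_{j=0}^k are log-concave sequences of positive reals, then the sequence c_r = Σ_{i+j=r} a_i b_j, for r = 0,...,m+k, is log-concave. -/

import Mathlib

open Finset

/-- Extend a `ℕ`-indexed sequence to `ℤ` by zero. -/
noncomputable def extZ (f : ℕ → ℝ) : ℤ → ℝ := fun i => if 0 ≤ i then f i.toNat else 0

lemma extZ_nonneg (f : ℕ → ℝ) (hf : ∀ n, 0 ≤ f n) : ∀ i : ℤ, 0 ≤ extZ f i := by
  intro i; unfold extZ; split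
  · exact hf _
  · exact le_refl _

lemma extZ_neg (f : ℕ → ℝ) (i : ℤ) (hi : i < 0) : extZ f i = 0 := by
  unfold extZ; rw [if_neg (by omega)]

lemma slc_nat (m : ℕ) (a : ℕ → ℝ) (ha_pos : ∀ i ≤ m, 0 < a i)
    (ha_lc : ∀ i, 1 ≤ i → i + 1 ≤ m → a (i - 1) * a (i + 1) ≤ a i ^ 2) :
    ∀ x y : ℕ, 1 ≤ x → x ≤ y → y + 1 ≤ m → a (x - 1) * a (y + 1) ≤ a x * a y := by
  intro x y hx hxy hym
  induction y with
  | zero => omega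
  | succ n ih =>
    rcases eq_or_lt_of_le hxy with h | h
    · rw [h]
      simpa [sq] using ha_lc (n+1) (by omega) (by omega)
    · have hxn : x ≤ n := by omega
      have h1 : a (x-1) * a (n+1) ≤ a x * a n := ih hxn (by omega)
      have h2 : a n * a (n+2) ≤ a (n+1)^2 := by
        simpa using ha_lc (n+1) (by omega) (by omega)
      have p0 : 0 < a n := ha_pos n (by omega)
      have p1 : 0 < a (n+1) := ha_pos (n+1) (by omega)
      have p2 : 0 < a (n+2) := ha_pos (n+2) (by omega)
      have px : 0 < a x := ha_pos x (by omega)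
      have px1 : 0 < a (x-1) := ha_pos (x-1) (by omega)
      have : a (x-1) * a (n+1+1) ≤ a x * a (n+1) := by
        nlinarith [mul_le_mul h1 h2 (by positivity) (by positivity)]
      exact this

lemma slc_int (m : ℕ) (a : ℕ → ℝ) (ha_pos : ∀ i ≤ m, 0 < a i) (ha_zero : ∀ i, m < i → a i = 0)
    (ha_lc : ∀ i, 1 ≤ i → i + 1 ≤ m → a (i - 1) * a (i + 1) ≤ a i ^ 2) :
    ∀ x y : ℤ, x ≤ y → extZ a (x-1) * extZ a (y+1) ≤ extZ a x * extZ a y := by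
  have hnn : ∀ n : ℕ, 0 ≤ a n := fun n => by
    rcases le_or_gt n m with h|h
    · exact (ha_pos n h).le
    · rw [ha_zero n h]
  have hZ := extZ_nonneg a hnn
  intro x y hxy
  by_cases hx : x ≤ 0
  · rw [extZ_neg a (x-1) (by omega), zero_mul]
    exact mul_nonneg (hZ x) (hZ y)
  · by_cases hy : (m:ℤ) ≤ y
    · have : extZ a (y+1) = 0 := by
        unfold extZ; rw [if_pos (by omega)]
        exact ha_zero _ (by omega)
      rw [this, mul_zero]
      exact mul_nonneg (hZ x) (hZ y)
    · have key := slc_nat m a ha_pos ha_lc x.toNat y.toNat (by omega) (by omega) (by omega)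
      unfold extZ
      rw [if_pos (by omega : (0:ℤ) ≤ x - 1), if_pos (by omega : (0:ℤ) ≤ y + 1),
        if_pos (by omega : (0:ℤ) ≤ x), if_pos (by omega : (0:ℤ) ≤ y),
        show (x-1).toNat = x.toNat - 1 from by omega,
        show (y+1).toNat = y.toNat + 1 from by omega]
      exact key

noncomputable def cterm (A B : ℤ → ℝ) (r : ℤ) (p : ℤ × ℤ) : ℝ :=
  (A p.1 * A p.2 - A (p.1 - 1) * A (p.2 + 1)) * (B (r - p.1) * B (r - p.2))

def csig : ℤ × ℤ → ℤ × ℤ := fun p => (p.2 + 1, p.1 - 1)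

lemma pt_nonneg (A B : ℤ → ℝ) (r : ℤ)
    (hA0 : ∀ i, 0 ≤ A i) (hB0 : ∀ j, 0 ≤ B j)
    (hA : ∀ x y : ℤ, x ≤ y → A (x-1) * A (y+1) ≤ A x * A y)
    (hB : ∀ x y : ℤ, x ≤ y → B (x-1) * B (y+1) ≤ B x * B y)
    (p : ℤ × ℤ) : 0 ≤ cterm A B r p + cterm A B r (csig p) := by
  obtain ⟨i, j⟩ := p
  show 0 ≤ (A i * A j - A (i - 1) * A (j + 1)) * (B (r - i) * B (r - j)) +
      (A (j+1) * A (i-1) - A (j + 1 - 1) * A (i - 1 + 1)) * (B (r - (j+1)) * B (r - (i-1)))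
  have e1 : (j:ℤ) + 1 - 1 = j := by ring
  have e2 : (i:ℤ) - 1 + 1 = i := by ring
  have e3 : r - (j+1) = r - j - 1 := by ring
  have e4 : r - (i-1) = r - i + 1 := by ring
  rw [e1, e2, e3, e4]
  rcases lt_trichotomy i (j+1) with h | h | h
  · have h1 := hA i j (by omega)
    have h2 := hB (r-j) (r-i) (by omega)
    have h2' : B (r-j-1) * B (r-i+1) ≤ B (r-j) * B (r-i) := h2
    nlinarith [mul_nonneg (sub_nonneg.2 h1) (sub_nonneg.2 h2')]
  · rw [show (i:ℤ) - 1 = j from by omega, show (j:ℤ) + 1 = i from by omega,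
      show r - j - 1 = r - i from by omega, show r - i + 1 = r - j from by omega]
    exact le_of_eq (by ring)
  · have h1 := hA (j+1) (i-1) (by omega)
    rw [e1, e2] at h1
    have h2 := hB (r-i+1) (r-j-1) (by omega)
    rw [show r-i+1-1 = r-i from by ring, show r-j-1+1 = r-j from by ring] at h2
    nlinarith [mul_nonneg (sub_nonneg.2 h1) (sub_nonneg.2 h2)]

lemma shift_left (A B : ℤ → ℝ) (r M mA : ℤ) (hM0 : 0 < M) (hMA : mA < M)
    (hAneg : ∀ i : ℤ, i < 0 → A i = 0) (hAbig : ∀ i : ℤ, mA < i → A i = 0) :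
    ∑ i ∈ Icc (-M) M, A i * B (r-1-i) = ∑ i ∈ Icc (-M) M, A (i-1) * B (r-i) := by
  have step : ∑ i ∈ Icc (-M) M, A (i-1) * B (r-i)
      = ∑ i ∈ Icc (-M-1) (M-1), A i * B (r-1-i) := by
    refine Finset.sum_nbij' (fun i => i - 1) (fun i => i + 1) ?_ ?_ ?_ ?_ ?_
    · intro x hx; simp only [mem_Icc] at *; omega
    · intro x hx; simp only [mem_Icc] at *; omega
    · intro x _; ring
    · intro x _; ring
    · intro x _; rw [show r - 1 - (x - 1) = r - x from by ring]
  rw [step]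
  have h1 : ∑ i ∈ Icc (-M-1) (M-1), A i * B (r-1-i)
      = ∑ i ∈ Icc (-M-1) M, A i * B (r-1-i) := by
    apply Finset.sum_subset
    · intro x hx; simp only [mem_Icc] at *; omega
    · intro x hx hnx
      simp only [mem_Icc] at hx hnx
      rw [hAbig x (by omega), zero_mul]
  have h2 : ∑ i ∈ Icc (-M) M, A i * B (r-1-i)
      = ∑ i ∈ Icc (-M-1) M, A i * B (r-1-i) := by
    apply Finset.sum_subset
    · intro x hx; simp only [mem_Icc] at *; omega
    · intro x hx hnx
      simp only [mem_Icc] at hx hnx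
      rw [hAneg x (by omega), zero_mul]
  rw [h1, ← h2]

lemma shift_right (A B : ℤ → ℝ) (r M mA : ℤ) (hM0 : 0 < M) (hMA : mA < M)
    (hAneg : ∀ i : ℤ, i < 0 → A i = 0) (hAbig : ∀ i : ℤ, mA < i → A i = 0) :
    ∑ i ∈ Icc (-M) M, A i * B (r+1-i) = ∑ i ∈ Icc (-M) M, A (i+1) * B (r-i) := by
  have step : ∑ i ∈ Icc (-M) M, A (i+1) * B (r-i)
      = ∑ i ∈ Icc (-M+1) (M+1), A i * B (r+1-i) := by
    refine Finset.sum_nbij' (fun i => i + 1) (fun i => i - 1) ?_ ?_ ?_ ?_ ?_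
    · intro x hx; simp only [mem_Icc] at *; omega
    · intro x hx; simp only [mem_Icc] at *; omega
    · intro x _; ring
    · intro x _; ring
    · intro x _; rw [show r + 1 - (x + 1) = r - x from by ring]
  rw [step]
  have h1 : ∑ i ∈ Icc (-M+1) (M+1), A i * B (r+1-i)
      = ∑ i ∈ Icc (-M) (M+1), A i * B (r+1-i) := by
    apply Finset.sum_subset
    · intro x hx; simp only [mem_Icc] at *; omega
    · intro x hx hnx
      simp only [mem_Icc] at hx hnx
      rw [hAneg x (by omega), zero_mul]
  have h2 : ∑ i ∈ Icc (-M) M, A i * B (r+1-i)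
      = ∑ i ∈ Icc (-M) (M+1), A i * B (r+1-i) := by
    apply Finset.sum_subset
    · intro x hx; simp only [mem_Icc] at *; omega
    · intro x hx hnx
      simp only [mem_Icc] at hx hnx
      rw [hAbig x (by omega), zero_mul]
  rw [h1, ← h2]

lemma key_ineq (A B : ℤ → ℝ) (r mA M : ℤ) (hM0 : 0 < M) (hMA : mA < M)
    (hA0 : ∀ i, 0 ≤ A i) (hB0 : ∀ j, 0 ≤ B j)
    (hAneg : ∀ i : ℤ, i < 0 → A i = 0) (hAbig : ∀ i : ℤ, mA < i → A i = 0)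
    (hA : ∀ x y : ℤ, x ≤ y → A (x-1) * A (y+1) ≤ A x * A y)
    (hB : ∀ x y : ℤ, x ≤ y → B (x-1) * B (y+1) ≤ B x * B y) :
    (∑ i ∈ Icc (-M) M, A i * B (r-1-i)) * (∑ i ∈ Icc (-M) M, A i * B (r+1-i))
      ≤ (∑ i ∈ Icc (-M) M, A i * B (r-i))^2 := by
  classical
  set S : Finset ℤ := Icc (-M) M with hSdef
  set P : Finset (ℤ × ℤ) := S ×ˢ S with hPdef
  have expand : (∑ i ∈ S, A i * B (r-i))^2
      - (∑ i ∈ S, A i * B (r-1-i)) * (∑ i ∈ S, A i * B (r+1-i))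
      = ∑ p ∈ P, cterm A B r p := by
    rw [shift_left A B r M mA hM0 hMA hAneg hAbig,
      shift_right A B r M mA hM0 hMA hAneg hAbig, sq,
      Finset.sum_mul_sum, Finset.sum_mul_sum, ← Finset.sum_product', ← Finset.sum_product',
      ← Finset.sum_sub_distrib]
    exact Finset.sum_congr rfl fun p _ => by unfold cterm; ring
  have main : 0 ≤ ∑ p ∈ P, cterm A B r p := by
    set T : Finset (ℤ × ℤ) := P ∪ P.image csig with hTdef
    have hzero : ∀ p ∈ T, p ∉ P → cterm A B r p = 0 := by
      intro p hp hnp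
      have hp' : p ∈ P.image csig := by
        rcases Finset.mem_union.1 hp with h | h
        · exact absurd h hnp
        · exact h
      obtain ⟨q, hq, rfl⟩ := Finset.mem_image.1 hp'
      obtain ⟨i, j⟩ := q
      simp only [hPdef, hSdef, csig, Finset.mem_product, Finset.mem_Icc] at hq hnp
      show (A (j+1) * A (i-1) - A (j+1-1) * A (i-1+1)) * (B (r - (j+1)) * B (r - (i-1))) = 0
      have hcase : j = M ∨ i = -M := by
        rcases hq with ⟨⟨h1, h2⟩, ⟨h3, h4⟩⟩
        by_contra hcon
        push_neg at hcon
        exact hnp ⟨⟨by omega, by omega⟩, ⟨by omega, by omega⟩⟩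
      rcases hcase with h | h
      · rw [hAbig (j+1) (by omega), show (j:ℤ)+1-1 = j from by ring, hAbig j (by omega)]
        ring
      · rw [hAneg (i-1) (by omega), show (i:ℤ)-1+1 = i from by ring, hAneg i (by omega)]
        ring
    have hPT : ∑ p ∈ P, cterm A B r p = ∑ p ∈ T, cterm A B r p :=
      Finset.sum_subset Finset.subset_union_left hzero
    have hinj : ∀ x ∈ T, ∀ y ∈ T, csig x = csig y → x = y := by
      intro x _ y _ h
      obtain ⟨x1, x2⟩ := x; obtain ⟨y1, y2⟩ := y
      simp only [csig, Prod.mk.injEq] at h ⊢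
      omega
    have hTim : T.image csig = T := by
      rw [hTdef, Finset.image_union, Finset.image_image]
      have hcc : csig ∘ csig = id := funext fun p => by
        obtain ⟨p1, p2⟩ := p; simp [csig]
      rw [hcc, Finset.image_id, Finset.union_comm]
    have hre : ∑ p ∈ T, cterm A B r (csig p) = ∑ p ∈ T, cterm A B r p := by
      rw [← Finset.sum_image hinj, hTim]
    have hnn : 0 ≤ ∑ p ∈ T, (cterm A B r p + cterm A B r (csig p)) :=
      Finset.sum_nonneg fun p _ => pt_nonneg A B r hA0 hB0 hA hB p
    rw [Finset.sum_add_distrib, hre] at hnn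
    rw [hPT]; linarith
  linarith

lemma csum_eq (a b : ℕ → ℝ) (M : ℤ) (n : ℕ) (hn : (n:ℤ) ≤ M) (hM : 0 < M) :
    ∑ ij ∈ Finset.HasAntidiagonal.antidiagonal n, a ij.1 * b ij.2
      = ∑ i ∈ Icc (-M) M, extZ a i * extZ b ((n:ℤ) - i) := by
  have h1 : ∑ i ∈ Icc (-M) M, extZ a i * extZ b ((n:ℤ) - i)
      = ∑ i ∈ Icc (0:ℤ) (n:ℤ), extZ a i * extZ b ((n:ℤ) - i) := by
    symm
    apply Finset.sum_subset
    · intro x hx; simp only [mem_Icc] at *; omega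
    · intro x hx hnx
      simp only [mem_Icc] at hx hnx
      rcases lt_or_ge x 0 with h | h
      · rw [extZ_neg a x h, zero_mul]
      · rw [extZ_neg b ((n:ℤ) - x) (by omega), mul_zero]
  rw [h1]
  symm
  refine Finset.sum_nbij' (fun i => (i.toNat, n - i.toNat)) (fun ij => (ij.1 : ℤ)) ?_ ?_ ?_ ?_ ?_
  · intro x hx
    simp only [mem_Icc] at hx
    simp only [Finset.HasAntidiagonal.mem_antidiagonal]
    omega
  · intro ij hij
    simp only [Finset.HasAntidiagonal.mem_antidiagonal] at hij
    simp only [mem_Icc]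
    omega
  · intro x hx
    simp only [mem_Icc] at hx
    simp only []
    omega
  · intro ij hij
    simp only [Finset.HasAntidiagonal.mem_antidiagonal] at hij
    simp only [Int.toNat_natCast]
    have : n - ij.1 = ij.2 := by omega
    rw [this]
  · intro x hx
    simp only [mem_Icc] at hx
    unfold extZ
    rw [if_pos (by omega : (0:ℤ) ≤ x), if_pos (by omega : (0:ℤ) ≤ (n:ℤ) - x),
      show ((n:ℤ) - x).toNat = n - x.toNat from by omega]

/-- The convolution of two log-concave sequences of positive reals is log-concave. -/
theorem convolution_log_concave (m k : ℕ) (a b : ℕ → ℝ)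
    (ha_pos : ∀ i ≤ m, 0 < a i) (ha_zero : ∀ i, m < i → a i = 0)
    (hb_pos : ∀ j ≤ k, 0 < b j) (hb_zero : ∀ j, k < j → b j = 0)
    (ha_lc : ∀ i, 1 ≤ i → i + 1 ≤ m → a (i - 1) * a (i + 1) ≤ a i ^ 2)
    (hb_lc : ∀ j, 1 ≤ j → j + 1 ≤ k → b (j - 1) * b (j + 1) ≤ b j ^ 2)
    (c : ℕ → ℝ)
    (hc : ∀ r, c r = ∑ ij ∈ Finset.HasAntidiagonal.antidiagonal r, a ij.1 * b ij.2) :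
    ∀ r, 1 ≤ r → r + 1 ≤ m + k → c (r - 1) * c (r + 1) ≤ c r ^ 2 := by
  intro r hr _
  have hann : ∀ n : ℕ, 0 ≤ a n := fun n => by
    rcases le_or_gt n m with h | h
    · exact (ha_pos n h).le
    · rw [ha_zero n h]
  have hbnn : ∀ n : ℕ, 0 ≤ b n := fun n => by
    rcases le_or_gt n k with h | h
    · exact (hb_pos n h).le
    · rw [hb_zero n h]
  set M : ℤ := (m : ℤ) + k + r + 2 with hM
  have hM0 : 0 < M := by positivity
  have hMm : (m:ℤ) < M := by omega
  rw [hc (r-1), hc (r+1), hc r,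
    csum_eq a b M (r-1) (by omega) hM0, csum_eq a b M (r+1) (by push_cast; omega) hM0,
    csum_eq a b M r (by omega) hM0,
    show (((r-1:ℕ)):ℤ) = (r:ℤ) - 1 from by omega,
    show (((r+1:ℕ)):ℤ) = (r:ℤ) + 1 from by push_cast; ring]
  have hAbig : ∀ i : ℤ, (m:ℤ) < i → extZ a i = 0 := by
    intro i hi
    unfold extZ
    split
    · exact ha_zero _ (by omega)
    · rfl
  exact key_ineq (extZ a) (extZ b) (r:ℤ) (m:ℤ) M hM0 hMm
    (extZ_nonneg a hann) (extZ_nonneg b hbnn)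
    (fun i hi => extZ_neg a i hi) hAbig
    (slc_int m a ha_pos ha_zero ha_lc) (slc_int k b hb_pos hb_zero hb_lc)
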